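/- Let α > 0 and let μ : [0, ∞) → ℝ^V be differentiable with μ(0) = 0 and μ'(t) = −α·∇L^coco(μ(t)) for all t ≥ 0. Then for all t ≥ 0 the coordinates of μ(t) are all equal to a common value μ̄(t), and the scalar function μ̄ satisfies the ordinary differential equation μ̄'(t) = (α/(n√K)) · (d_p − F(μ̄(t))), where F(μ) = (Σ_{u ∈ N_{c+1}} d_u·exp(λ(1{u ∈ N_c} + μ·d_u))) / (Σ_{u ∈ N_{c+1}} exp(λ(1{u ∈ N_c} + μ·d_u)) + n − |N_{c+1}|). -/

import Mathlib

open Finset Filter Matrix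

variable {V : Type*}

/-- `ball E r j` : set of vertices reachable from `r` within `j` steps along edges in `E`. -/
def ball [Fintype V] [DecidableEq V] (E : Finset (V × V)) (r : V) : ℕ → Finset V
  | 0 => {r}
  | j + 1 => Finset.univ.filter fun v => v ∈ ball E r j ∨ ∃ u ∈ ball E r j, (u, v) ∈ E

/-- in-degree of `v` restricted to sources in `N_c`. -/
def degc [Fintype V] [DecidableEq V] (E : Finset (V × V)) (r : V) (c : ℕ) (v : V) : ℕ :=
  ((ball E r c).filter fun u => (u, v) ∈ E).card

/-- λ = 1/√K with K = |N_c|. -/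
noncomputable def lamc [Fintype V] [DecidableEq V] (E : Finset (V × V)) (r : V) (c : ℕ) : ℝ :=
  1 / Real.sqrt ((ball E r c).card : ℝ)

/-- the logit ξ_v(μ). -/
noncomputable def xi [Fintype V] [DecidableEq V] (E : Finset (V × V)) (r : V) (c : ℕ)
    (μ : V → ℝ) (v : V) : ℝ :=
  lamc E r c * (if v ∈ ball E r c then 1 else 0)
    + lamc E r c * ∑ u ∈ (ball E r c).filter (fun u => (u, v) ∈ E), μ u

/-- BFS loss. -/
noncomputable def bfsLoss [Fintype V] [DecidableEq V] (E : Finset (V × V)) (r : V) (c : ℕ)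
    (μ : V → ℝ) : ℝ :=
  - Real.log ((∑ v ∈ ball E r (c + 1), Real.exp (xi E r c μ v)) /
      ∑ v : V, Real.exp (xi E r c μ v))

/-- edge set of the permuted instance. -/
def permE [Fintype V] [DecidableEq V] (π : Equiv.Perm V) (E : Finset (V × V)) :
    Finset (V × V) :=
  E.image fun e => (π e.1, π e.2)

/-- permutation-averaged BFS loss. -/
noncomputable def avgBfsLoss [Fintype V] [DecidableEq V] (E : Finset (V × V)) (r : V) (c : ℕ)
    (μ : V → ℝ) : ℝ :=
  ((Nat.factorial (Fintype.card V) : ℝ))⁻¹ *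
    ∑ π : Equiv.Perm V, bfsLoss (permE π E) (π r) c μ

/-- coconut loss with target `p`. -/
noncomputable def cocoLoss [Fintype V] [DecidableEq V] (E : Finset (V × V)) (r : V) (c : ℕ)
    (p : V) (μ : V → ℝ) : ℝ :=
  - Real.log (Real.exp (xi E r c μ p) / ∑ v : V, Real.exp (xi E r c μ v))

/-- permutation-averaged coconut loss. -/
noncomputable def avgCocoLoss [Fintype V] [DecidableEq V] (E : Finset (V × V)) (r : V) (c : ℕ)
    (p : V) (μ : V → ℝ) : ℝ :=
  ((Nat.factorial (Fintype.card V) : ℝ))⁻¹ *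
    ∑ π : Equiv.Perm V, cocoLoss (permE π E) (π r) c (π p) μ

/-- the scalar function F. -/
noncomputable def Fc [Fintype V] [DecidableEq V] (E : Finset (V × V)) (r : V) (c : ℕ)
    (x : ℝ) : ℝ :=
  (∑ u ∈ ball E r (c + 1), (degc E r c u : ℝ) *
      Real.exp (lamc E r c * ((if u ∈ ball E r c then 1 else 0) + x * (degc E r c u : ℝ))))
    / ((∑ u ∈ ball E r (c + 1),
        Real.exp (lamc E r c * ((if u ∈ ball E r c then 1 else 0) + x * (degc E r c u : ℝ))))
      + ((Fintype.card V : ℝ) - ((ball E r (c + 1)).card : ℝ)))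

section Aux

variable [Fintype V] [DecidableEq V] (E : Finset (V × V)) (r : V) (c : ℕ)

lemma stmt7_mem_permE {π : Equiv.Perm V} {a b : V} :
    (π a, π b) ∈ permE π E ↔ (a, b) ∈ E := by
  constructor
  · intro h
    obtain ⟨⟨x, y⟩, hxy, hh⟩ := Finset.mem_image.mp h
    obtain ⟨h1, h2⟩ := Prod.ext_iff.mp hh
    rwa [← π.injective h1, ← π.injective h2]
  · intro h
    exact Finset.mem_image_of_mem _ h

end Aux

section Aux2

variable [Fintype V] [DecidableEq V] (E : Finset (V × V)) (r : V) (c : ℕ)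

lemma stmt7_ball_permE (π : Equiv.Perm V) (j : ℕ) :
    ball (permE π E) (π r) j = (ball E r j).image π := by
  induction j with
  | zero => simp [ball]
  | succ j ih =>
    ext v
    obtain ⟨w, rfl⟩ := π.surjective v
    rw [π.injective.mem_finset_image]
    show _ ∈ Finset.univ.filter _ ↔ _ ∈ Finset.univ.filter _
    simp only [Finset.mem_filter, Finset.mem_univ, true_and, ih,
      π.injective.mem_finset_image]
    constructor
    · rintro (h | ⟨u, hu, he⟩)
      · exact Or.inl h
      · obtain ⟨u₀, hu₀, rfl⟩ := Finset.mem_image.mp hu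
        exact Or.inr ⟨u₀, hu₀, (stmt7_mem_permE E).mp he⟩
    · rintro (h | ⟨u, hu, he⟩)
      · exact Or.inl h
      · exact Or.inr ⟨π u, Finset.mem_image_of_mem _ hu, (stmt7_mem_permE E).mpr he⟩

lemma stmt7_lamc_permE (π : Equiv.Perm V) : lamc (permE π E) (π r) c = lamc E r c := by
  unfold lamc
  rw [stmt7_ball_permE, Finset.card_image_of_injective _ π.injective]

lemma stmt7_xi_permE (π : Equiv.Perm V) (μ : V → ℝ) (v : V) :
    xi (permE π E) (π r) c μ (π v) = xi E r c (μ ∘ π) v := by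
  unfold xi
  rw [stmt7_lamc_permE, stmt7_ball_permE, Finset.filter_image,
    Finset.sum_image (fun a _ b _ h => π.injective h)]
  simp only [Function.Injective.mem_finset_image π.injective]
  have h2 : (ball E r c).filter (fun u => (π u, π v) ∈ permE π E)
      = (ball E r c).filter (fun u => (u, v) ∈ E) :=
    Finset.filter_congr fun u _ => stmt7_mem_permE E
  rw [h2]
  rfl

lemma stmt7_cocoLoss_permE (π : Equiv.Perm V) (p : V) (μ : V → ℝ) :
    cocoLoss (permE π E) (π r) c (π p) μ = cocoLoss E r c p (μ ∘ π) := by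
  unfold cocoLoss
  have hs : ∑ v : V, Real.exp (xi (permE π E) (π r) c μ v)
      = ∑ v : V, Real.exp (xi E r c (μ ∘ π) v) := by
    rw [← Equiv.sum_comp π fun v => Real.exp (xi (permE π E) (π r) c μ v)]
    exact Finset.sum_congr rfl fun v _ => by rw [stmt7_xi_permE]
  rw [hs, stmt7_xi_permE]

lemma stmt7_avg_eq (p : V) (μ : V → ℝ) :
    avgCocoLoss E r c p μ =
      ((Nat.factorial (Fintype.card V) : ℝ))⁻¹ *
        ∑ π : Equiv.Perm V, cocoLoss E r c p (μ ∘ π) := by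
  unfold avgCocoLoss
  congr 1
  exact Finset.sum_congr rfl fun π _ => stmt7_cocoLoss_permE E r c π p μ

lemma stmt7_avg_comp (p : V) (μ : V → ℝ) (σ : Equiv.Perm V) :
    avgCocoLoss E r c p (μ ∘ σ) = avgCocoLoss E r c p μ := by
  rw [stmt7_avg_eq, stmt7_avg_eq]
  congr 1
  rw [← Equiv.sum_comp (Equiv.mulLeft σ) fun π => cocoLoss E r c p (μ ∘ π)]
  exact Finset.sum_congr rfl fun π _ => by
    simp only [Equiv.coe_mulLeft, Equiv.Perm.coe_mul, Function.comp_assoc]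

end Aux2

section Aux3

variable [Fintype V] [DecidableEq V] (E : Finset (V × V)) (r : V) (c : ℕ)

noncomputable def Sden (ν : V → ℝ) : ℝ := ∑ v : V, Real.exp (xi E r c ν v)

noncomputable def chiS (w v : V) : ℝ :=
  if w ∈ (ball E r c).filter (fun u => (u, v) ∈ E) then 1 else 0

lemma stmt7_Sden_pos [Nonempty V] (ν : V → ℝ) : 0 < Sden E r c ν :=
  Finset.sum_pos (fun v _ => Real.exp_pos _) Finset.univ_nonempty

lemma stmt7_xi_update (ν : V → ℝ) (w : V) (y : ℝ) (v : V) :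
    xi E r c (Function.update ν w y) v
      = xi E r c ν v + lamc E r c * chiS E r c w v * (y - ν w) := by
  unfold xi chiS
  by_cases h : w ∈ (ball E r c).filter (fun u => (u, v) ∈ E)
  · rw [if_pos h, Finset.sum_update_of_mem h]
    have h2 : ∑ u ∈ (ball E r c).filter (fun u => (u, v) ∈ E), ν u
        = ν w + ∑ u ∈ ((ball E r c).filter (fun u => (u, v) ∈ E)) \ {w}, ν u := by
      rw [← Finset.sum_update_of_mem h]
      exact Finset.sum_congr rfl fun u hu => by
        rw [Function.update_apply]
        split
        · next hh => rw [hh]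
        · rfl
    rw [h2]; ring
  · rw [if_neg h]
    have h2 : ∑ u ∈ (ball E r c).filter (fun u => (u, v) ∈ E), Function.update ν w y u
        = ∑ u ∈ (ball E r c).filter (fun u => (u, v) ∈ E), ν u :=
      Finset.sum_congr rfl fun u hu => Function.update_of_ne (fun hq => h (by rwa [hq] at hu)) _ _
    rw [h2]; ring

lemma stmt7_hasDerivAt_xi_update (ν : V → ℝ) (w : V) (v : V) (y₀ : ℝ) :
    HasDerivAt (fun y => xi E r c (Function.update ν w y) v)
      (lamc E r c * chiS E r c w v) y₀ := by
  have hf : (fun y => xi E r c (Function.update ν w y) v)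
      = fun y => xi E r c ν v + lamc E r c * chiS E r c w v * (y - ν w) :=
    funext fun y => stmt7_xi_update E r c ν w y v
  rw [hf]
  simpa using (((hasDerivAt_id y₀).sub_const (ν w)).const_mul
    (lamc E r c * chiS E r c w v)).const_add (xi E r c ν v)

lemma stmt7_cocoLoss_split [Nonempty V] (p : V) (ν : V → ℝ) :
    cocoLoss E r c p ν = - xi E r c ν p + Real.log (Sden E r c ν) := by
  unfold cocoLoss
  rw [show (∑ v : V, Real.exp (xi E r c ν v)) = Sden E r c ν from rfl,
    Real.log_div (Real.exp_ne_zero _) (ne_of_gt (stmt7_Sden_pos E r c ν)),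
    Real.log_exp]
  ring

noncomputable def dco (p : V) (ν : V → ℝ) (w : V) : ℝ :=
  lamc E r c * (-(chiS E r c w p)
    + (∑ v : V, chiS E r c w v * Real.exp (xi E r c ν v)) / Sden E r c ν)

lemma stmt7_hasDerivAt_coco_update [Nonempty V] (p : V) (ν : V → ℝ) (w : V) :
    HasDerivAt (fun y => cocoLoss E r c p (Function.update ν w y))
      (dco E r c p ν w) (ν w) := by
  have hx : ∀ v, HasDerivAt (fun y => xi E r c (Function.update ν w y) v)
      (lamc E r c * chiS E r c w v) (ν w) :=
    fun v => stmt7_hasDerivAt_xi_update E r c ν w v (ν w)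
  have hupd : Function.update ν w (ν w) = ν := Function.update_eq_self w ν
  have hS : HasDerivAt (fun y => Sden E r c (Function.update ν w y))
      (∑ v : V, lamc E r c * chiS E r c w v * Real.exp (xi E r c ν v)) (ν w) := by
    unfold Sden
    apply HasDerivAt.fun_sum
    intro v _
    have h1 := (hx v).exp
    rw [hupd] at h1
    simpa [mul_comm] using h1
  have hSne : Sden E r c ν ≠ 0 := ne_of_gt (stmt7_Sden_pos E r c ν)
  have hlog : HasDerivAt (fun y => Real.log (Sden E r c (Function.update ν w y)))
      ((∑ v : V, lamc E r c * chiS E r c w v * Real.exp (xi E r c ν v)) / Sden E r c ν)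
      (ν w) := by
    have h1 := hS.log (by rw [hupd]; exact hSne)
    rwa [hupd] at h1
  have hmain := ((hx p).neg).add hlog
  have hfun : (fun y => cocoLoss E r c p (Function.update ν w y))
      = fun y => - xi E r c (Function.update ν w y) p
          + Real.log (Sden E r c (Function.update ν w y)) :=
    funext fun y => stmt7_cocoLoss_split E r c p (Function.update ν w y)
  rw [hfun]
  convert hmain using 1
  · rfl
  · rfl
  · rfl
  have hms : ∑ v : V, lamc E r c * chiS E r c w v * Real.exp (xi E r c ν v)
      = lamc E r c * ∑ v : V, chiS E r c w v * Real.exp (xi E r c ν v) := by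
    rw [Finset.mul_sum]
    exact Finset.sum_congr rfl fun v _ => by ring
  rw [hms]
  unfold dco
  ring

end Aux3

section Aux4

variable [Fintype V] [DecidableEq V] (E : Finset (V × V)) (r : V) (c : ℕ)

noncomputable def PhiG (p : V) (μ : V → ℝ) (v : V) : ℝ :=
  ((Nat.factorial (Fintype.card V) : ℝ))⁻¹ *
    ∑ π : Equiv.Perm V, dco E r c p (μ ∘ π) (π⁻¹ v)

lemma stmt7_update_comp (μ : V → ℝ) (v : V) (y : ℝ) (π : Equiv.Perm V) :
    (Function.update μ v y) ∘ π = Function.update (μ ∘ π) (π⁻¹ v) y := by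
  funext u
  rw [Function.comp_apply, Function.update_apply, Function.update_apply]
  have : (π u = v) = (u = π⁻¹ v) := by
    rw [eq_iff_iff]
    constructor
    · intro h; rw [← h]; simp
    · intro h; rw [h]; simp
  simp only [this]
  rfl

lemma stmt7_hasDerivAt_avg_update [Nonempty V] (p : V) (μ : V → ℝ) (v : V) :
    HasDerivAt (fun y => avgCocoLoss E r c p (Function.update μ v y))
      (PhiG E r c p μ v) (μ v) := by
  have hfun : (fun y => avgCocoLoss E r c p (Function.update μ v y))
      = fun y => ((Nat.factorial (Fintype.card V) : ℝ))⁻¹ *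
          ∑ π : Equiv.Perm V, cocoLoss E r c p
            (Function.update (μ ∘ π) (π⁻¹ v) y) := by
    funext y
    rw [stmt7_avg_eq]
    congr 1
    exact Finset.sum_congr rfl fun π _ => by rw [stmt7_update_comp]
  rw [hfun]
  unfold PhiG
  apply HasDerivAt.const_mul
  apply HasDerivAt.fun_sum
  intro π _
  have h1 := stmt7_hasDerivAt_coco_update E r c p (μ ∘ π) (π⁻¹ v)
  have h2 : (μ ∘ π) (π⁻¹ v) = μ v := by simp
  rwa [h2] at h1

lemma stmt7_PhiG_comp [Nonempty V] (p : V) (μ : V → ℝ) (σ : Equiv.Perm V) (v : V) :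
    PhiG E r c p (μ ∘ σ) v = PhiG E r c p μ (σ v) := by
  have h1 := stmt7_hasDerivAt_avg_update E r c p (μ ∘ σ) v
  have h2 := stmt7_hasDerivAt_avg_update E r c p μ (σ v)
  have hfun : (fun y => avgCocoLoss E r c p (Function.update (μ ∘ σ) v y))
      = fun y => avgCocoLoss E r c p (Function.update μ (σ v) y) := by
    funext y
    have : Function.update (μ ∘ σ) v y = (Function.update μ (σ v) y) ∘ σ := by
      rw [stmt7_update_comp]
      simp
    rw [this, stmt7_avg_comp]
  rw [hfun] at h1
  exact h1.unique h2

end Aux4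

section Aux5

/-- Key analytic lemma: softmax-type ratios move by at most `2M` when logits move
by at most `M`. -/
lemma stmt7_ratio_lip {ι : Type*} [Fintype ι] [Nonempty ι] (χ a b : ι → ℝ) (M : ℝ)
    (hχ0 : ∀ i, 0 ≤ χ i) (hχ1 : ∀ i, χ i ≤ 1) (hb : ∀ i, |b i| ≤ M) :
    |(∑ i, χ i * Real.exp (a i + b i)) / (∑ i, Real.exp (a i + b i))
      - (∑ i, χ i * Real.exp (a i)) / (∑ i, Real.exp (a i))| ≤ 2 * M := by
  have hM : 0 ≤ M := le_trans (abs_nonneg _) (hb (Classical.arbitrary ι))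
  set S : ℝ → ℝ := fun θ => ∑ i, Real.exp (a i + θ * b i) with hS
  set N : ℝ → ℝ := fun θ => ∑ i, χ i * Real.exp (a i + θ * b i) with hN
  set S' : ℝ → ℝ := fun θ => ∑ i, Real.exp (a i + θ * b i) * b i with hS'
  set N' : ℝ → ℝ := fun θ => ∑ i, χ i * (Real.exp (a i + θ * b i) * b i) with hN'
  have hSpos : ∀ θ, 0 < S θ :=
    fun θ => Finset.sum_pos (fun i _ => Real.exp_pos _) Finset.univ_nonempty
  have hexp : ∀ θ i, HasDerivAt (fun θ : ℝ => Real.exp (a i + θ * b i))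
      (Real.exp (a i + θ * b i) * b i) θ := by
    intro θ i
    simpa using (((hasDerivAt_id θ).mul_const (b i)).const_add (a i)).exp
  have hSd : ∀ θ, HasDerivAt S (S' θ) θ := by
    intro θ
    exact HasDerivAt.fun_sum fun i _ => hexp θ i
  have hNd : ∀ θ, HasDerivAt N (N' θ) θ := by
    intro θ
    exact HasDerivAt.fun_sum fun i _ => (hexp θ i).const_mul (χ i)
  have hNnn : ∀ θ, 0 ≤ N θ :=
    fun θ => Finset.sum_nonneg fun i _ =>
      mul_nonneg (hχ0 i) (Real.exp_pos _).le
  have hNleS : ∀ θ, N θ ≤ S θ :=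
    fun θ => Finset.sum_le_sum fun i _ => by
      calc χ i * Real.exp (a i + θ * b i) ≤ 1 * Real.exp (a i + θ * b i) :=
            mul_le_mul_of_nonneg_right (hχ1 i) (Real.exp_pos _).le
        _ = Real.exp (a i + θ * b i) := one_mul _
  have hS'le : ∀ θ, |S' θ| ≤ M * S θ := by
    intro θ
    calc |S' θ| ≤ ∑ i, |Real.exp (a i + θ * b i) * b i| :=
          Finset.abs_sum_le_sum_abs _ _
      _ ≤ ∑ i, M * Real.exp (a i + θ * b i) := Finset.sum_le_sum fun i _ => by
          rw [abs_mul, abs_of_pos (Real.exp_pos _), mul_comm]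
          exact mul_le_mul_of_nonneg_right (hb i) (Real.exp_pos _).le
      _ = M * S θ := by rw [hS, Finset.mul_sum]
  have hN'le : ∀ θ, |N' θ| ≤ M * S θ := by
    intro θ
    calc |N' θ| ≤ ∑ i, |χ i * (Real.exp (a i + θ * b i) * b i)| :=
          Finset.abs_sum_le_sum_abs _ _
      _ ≤ ∑ i, M * Real.exp (a i + θ * b i) := Finset.sum_le_sum fun i _ => by
          rw [abs_mul, abs_mul, abs_of_nonneg (hχ0 i), abs_of_pos (Real.exp_pos _)]
          calc χ i * (Real.exp (a i + θ * b i) * |b i|)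
              ≤ 1 * (Real.exp (a i + θ * b i) * M) := by
                apply mul_le_mul (hχ1 i)
                  (mul_le_mul_of_nonneg_left (hb i) (Real.exp_pos _).le)
                  (mul_nonneg (Real.exp_pos _).le (abs_nonneg _)) one_pos.le
            _ = M * Real.exp (a i + θ * b i) := by ring
      _ = M * S θ := by rw [hS, Finset.mul_sum]
  set g : ℝ → ℝ := fun θ => N θ / S θ with hg
  set g' : ℝ → ℝ := fun θ => (N' θ * S θ - N θ * S' θ) / (S θ) ^ 2 with hg'
  have hgd : ∀ θ, HasDerivAt g (g' θ) θ :=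
    fun θ => (hNd θ).div (hSd θ) (ne_of_gt (hSpos θ))
  have hbound : ∀ θ, |g' θ| ≤ 2 * M := by
    intro θ
    rw [hg']
    rw [abs_div, abs_of_pos (pow_pos (hSpos θ) 2)]
    rw [div_le_iff₀ (pow_pos (hSpos θ) 2)]
    calc |N' θ * S θ - N θ * S' θ| ≤ |N' θ * S θ| + |N θ * S' θ| := abs_sub _ _
      _ = |N' θ| * S θ + N θ * |S' θ| := by
          rw [abs_mul, abs_mul, abs_of_pos (hSpos θ), abs_of_nonneg (hNnn θ)]
      _ ≤ (M * S θ) * S θ + S θ * (M * S θ) := by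
          apply add_le_add
          · exact mul_le_mul_of_nonneg_right (hN'le θ) (hSpos θ).le
          · exact mul_le_mul (hNleS θ) (hS'le θ) (abs_nonneg _) (hSpos θ).le
      _ = 2 * M * S θ ^ 2 := by ring
  have hmvt := norm_image_sub_le_of_norm_deriv_le_segment'
    (f := g) (f' := g') (a := 0) (b := 1) (C := 2 * M)
    (fun θ _ => (hgd θ).hasDerivWithinAt)
    (fun θ _ => hbound θ) 1 (by norm_num)
  have h1 : g 1 = (∑ i, χ i * Real.exp (a i + b i)) / (∑ i, Real.exp (a i + b i)) := by
    rw [hg, hN, hS]; norm_num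
  have h0 : g 0 = (∑ i, χ i * Real.exp (a i)) / (∑ i, Real.exp (a i)) := by
    rw [hg, hN, hS]; norm_num
  rw [h1, h0] at hmvt
  simpa using hmvt

end Aux5

section Aux6

variable [Fintype V] [DecidableEq V] (E : Finset (V × V)) (r : V) (c : ℕ)

lemma stmt7_lamc_nonneg : 0 ≤ lamc E r c := by
  unfold lamc; positivity

lemma stmt7_chiS_nonneg (w v : V) : 0 ≤ chiS E r c w v := by
  unfold chiS; split <;> norm_num

lemma stmt7_chiS_le_one (w v : V) : chiS E r c w v ≤ 1 := by
  unfold chiS; split <;> norm_num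

lemma stmt7_xi_diff_bound (ν ν' : V → ℝ) (v : V) :
    |xi E r c ν v - xi E r c ν' v|
      ≤ lamc E r c * ((ball E r c).card : ℝ) * dist ν ν' := by
  have hsub : xi E r c ν v - xi E r c ν' v
      = lamc E r c * ∑ u ∈ (ball E r c).filter (fun u => (u, v) ∈ E), (ν u - ν' u) := by
    unfold xi
    rw [Finset.sum_sub_distrib]
    ring
  rw [hsub, abs_mul, abs_of_nonneg (stmt7_lamc_nonneg E r c), mul_assoc]
  apply mul_le_mul_of_nonneg_left _ (stmt7_lamc_nonneg E r c)
  calc |∑ u ∈ (ball E r c).filter (fun u => (u, v) ∈ E), (ν u - ν' u)|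
      ≤ ∑ u ∈ (ball E r c).filter (fun u => (u, v) ∈ E), |ν u - ν' u| :=
        Finset.abs_sum_le_sum_abs _ _
    _ ≤ ∑ u ∈ (ball E r c).filter (fun u => (u, v) ∈ E), dist ν ν' :=
        Finset.sum_le_sum fun u _ => by
          rw [← Real.dist_eq]; exact dist_le_pi_dist ν ν' u
    _ = (((ball E r c).filter (fun u => (u, v) ∈ E)).card : ℝ) * dist ν ν' := by
        rw [Finset.sum_const, nsmul_eq_mul]
    _ ≤ ((ball E r c).card : ℝ) * dist ν ν' := by
        apply mul_le_mul_of_nonneg_right _ dist_nonneg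
        exact_mod_cast Finset.card_filter_le _ _

lemma stmt7_dco_lip [Nonempty V] (p : V) (ν ν' : V → ℝ) (w : V) :
    |dco E r c p ν w - dco E r c p ν' w|
      ≤ lamc E r c * (2 * (lamc E r c * ((ball E r c).card : ℝ) * dist ν ν')) := by
  have key := stmt7_ratio_lip (chiS E r c w) (fun v => xi E r c ν' v)
    (fun v => xi E r c ν v - xi E r c ν' v)
    (lamc E r c * ((ball E r c).card : ℝ) * dist ν ν')
    (fun v => stmt7_chiS_nonneg E r c w v) (fun v => stmt7_chiS_le_one E r c w v)
    (fun v => stmt7_xi_diff_bound E r c ν ν' v)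
  have hsimp : ∀ v, xi E r c ν' v + (xi E r c ν v - xi E r c ν' v) = xi E r c ν v :=
    fun v => by ring
  simp only [hsimp] at key
  have hdiff : dco E r c p ν w - dco E r c p ν' w
      = lamc E r c *
        ((∑ v : V, chiS E r c w v * Real.exp (xi E r c ν v)) / Sden E r c ν
          - (∑ v : V, chiS E r c w v * Real.exp (xi E r c ν' v)) / Sden E r c ν') := by
    unfold dco
    ring
  rw [hdiff, abs_mul, abs_of_nonneg (stmt7_lamc_nonneg E r c)]
  exact mul_le_mul_of_nonneg_left key (stmt7_lamc_nonneg E r c)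

lemma stmt7_dist_comp (μ μ' : V → ℝ) (π : Equiv.Perm V) :
    dist (μ ∘ π) (μ' ∘ π) ≤ dist μ μ' :=
  (dist_pi_le_iff dist_nonneg).mpr fun v => dist_le_pi_dist μ μ' (π v)

lemma stmt7_PhiG_lip [Nonempty V] (p : V) (μ μ' : V → ℝ) (v : V) :
    |PhiG E r c p μ v - PhiG E r c p μ' v|
      ≤ 2 * lamc E r c ^ 2 * ((ball E r c).card : ℝ) * dist μ μ' := by
  have hfac : (0:ℝ) < (Nat.factorial (Fintype.card V) : ℝ) := by
    exact_mod_cast Nat.factorial_pos _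
  have hdiff : PhiG E r c p μ v - PhiG E r c p μ' v
      = ((Nat.factorial (Fintype.card V) : ℝ))⁻¹ *
          ∑ π : Equiv.Perm V,
            (dco E r c p (μ ∘ π) (π⁻¹ v) - dco E r c p (μ' ∘ π) (π⁻¹ v)) := by
    unfold PhiG
    rw [Finset.sum_sub_distrib]
    ring
  rw [hdiff, abs_mul, abs_of_nonneg (inv_nonneg.mpr hfac.le)]
  have hbound : |∑ π : Equiv.Perm V,
      (dco E r c p (μ ∘ π) (π⁻¹ v) - dco E r c p (μ' ∘ π) (π⁻¹ v))|
      ≤ (Nat.factorial (Fintype.card V) : ℝ) *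
          (2 * lamc E r c ^ 2 * ((ball E r c).card : ℝ) * dist μ μ') := by
    calc |∑ π : Equiv.Perm V, (dco E r c p (μ ∘ π) (π⁻¹ v) - dco E r c p (μ' ∘ π) (π⁻¹ v))|
        ≤ ∑ π : Equiv.Perm V, |dco E r c p (μ ∘ π) (π⁻¹ v) - dco E r c p (μ' ∘ π) (π⁻¹ v)| :=
          Finset.abs_sum_le_sum_abs _ _
      _ ≤ ∑ _π : Equiv.Perm V,
            (2 * lamc E r c ^ 2 * ((ball E r c).card : ℝ) * dist μ μ') := by
          apply Finset.sum_le_sum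
          intro π _
          calc |dco E r c p (μ ∘ π) (π⁻¹ v) - dco E r c p (μ' ∘ π) (π⁻¹ v)|
              ≤ lamc E r c * (2 * (lamc E r c * ((ball E r c).card : ℝ)
                  * dist (μ ∘ π) (μ' ∘ π))) := stmt7_dco_lip E r c p _ _ _
            _ ≤ lamc E r c * (2 * (lamc E r c * ((ball E r c).card : ℝ) * dist μ μ')) := by
                apply mul_le_mul_of_nonneg_left _ (stmt7_lamc_nonneg E r c)
                apply mul_le_mul_of_nonneg_left _ (by norm_num)
                apply mul_le_mul_of_nonneg_left (stmt7_dist_comp μ μ' π)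
                exact mul_nonneg (stmt7_lamc_nonneg E r c) (by positivity)
            _ = 2 * lamc E r c ^ 2 * ((ball E r c).card : ℝ) * dist μ μ' := by ring
      _ = (Nat.factorial (Fintype.card V) : ℝ) *
            (2 * lamc E r c ^ 2 * ((ball E r c).card : ℝ) * dist μ μ') := by
          rw [Finset.sum_const, nsmul_eq_mul, Finset.card_univ, Fintype.card_perm]
  calc ((Nat.factorial (Fintype.card V) : ℝ))⁻¹ *
        |∑ π : Equiv.Perm V, (dco E r c p (μ ∘ π) (π⁻¹ v) - dco E r c p (μ' ∘ π) (π⁻¹ v))|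
      ≤ ((Nat.factorial (Fintype.card V) : ℝ))⁻¹ *
          ((Nat.factorial (Fintype.card V) : ℝ) *
            (2 * lamc E r c ^ 2 * ((ball E r c).card : ℝ) * dist μ μ')) :=
        mul_le_mul_of_nonneg_left hbound (inv_nonneg.mpr hfac.le)
    _ = 2 * lamc E r c ^ 2 * ((ball E r c).card : ℝ) * dist μ μ' := by
        rw [← mul_assoc, inv_mul_cancel₀ (ne_of_gt hfac), one_mul]

end Aux6

section Aux7

variable [Fintype V] [DecidableEq V] (E : Finset (V × V)) (r : V) (c : ℕ)

lemma stmt7_sum_perm_apply_const {h : V → ℝ} {w w' : V} :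
    ∑ π : Equiv.Perm V, h (π w) = ∑ π : Equiv.Perm V, h (π w') := by
  have := Equiv.sum_comp (Equiv.mulRight (Equiv.swap w w'))
    (fun π : Equiv.Perm V => h (π w))
  rw [← this]
  exact Finset.sum_congr rfl fun π _ => by
    simp [Equiv.Perm.mul_apply]

lemma stmt7_sum_perm_apply (h : V → ℝ) (w : V) :
    (Fintype.card V : ℝ) * ∑ π : Equiv.Perm V, h (π w)
      = (Nat.factorial (Fintype.card V) : ℝ) * ∑ u : V, h u := by
  have h1 : ∑ w' : V, (∑ π : Equiv.Perm V, h (π w'))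
      = (Fintype.card V : ℝ) * ∑ π : Equiv.Perm V, h (π w) := by
    rw [Finset.sum_congr rfl fun w' _ =>
      (stmt7_sum_perm_apply_const (h := h) (w := w') (w' := w))]
    rw [Finset.sum_const, nsmul_eq_mul, Finset.card_univ]
  rw [← h1, Finset.sum_comm]
  rw [Finset.sum_congr rfl fun π _ => Equiv.sum_comp π h]
  rw [Finset.sum_const, nsmul_eq_mul, Finset.card_univ, Fintype.card_perm]

lemma stmt7_ball_mono (j : ℕ) : ball E r j ⊆ ball E r (j + 1) := by
  intro v hv
  show v ∈ Finset.univ.filter _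
  rw [Finset.mem_filter]
  exact ⟨Finset.mem_univ v, Or.inl hv⟩

lemma stmt7_degc_eq_zero {v : V} (hv : v ∉ ball E r (c + 1)) : degc E r c v = 0 := by
  unfold degc
  rw [Finset.card_eq_zero, Finset.filter_eq_empty_iff]
  intro u hu he
  apply hv
  show v ∈ Finset.univ.filter _
  rw [Finset.mem_filter]
  exact ⟨Finset.mem_univ v, Or.inr ⟨u, hu, he⟩⟩

lemma stmt7_xi_const (x : ℝ) (v : V) :
    xi E r c (fun _ => x) v
      = lamc E r c * ((if v ∈ ball E r c then 1 else 0) + x * (degc E r c v : ℝ)) := by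
  unfold xi degc
  rw [Finset.sum_const, nsmul_eq_mul]
  ring

lemma stmt7_sum_chiS (v : V) : ∑ u : V, chiS E r c u v = (degc E r c v : ℝ) := by
  unfold chiS degc
  rw [Finset.sum_boole]
  congr 1
  rw [Finset.filter_mem_eq_inter, Finset.univ_inter]

end Aux7

section Aux8

variable [Fintype V] [DecidableEq V] (E : Finset (V × V)) (r : V) (c : ℕ)

lemma stmt7_xi_const_zero {x : ℝ} {v : V} (hv : v ∉ ball E r (c + 1)) :
    xi E r c (fun _ => x) v = 0 := by
  rw [stmt7_xi_const]
  rw [if_neg (fun h => hv (stmt7_ball_mono E r c h)), stmt7_degc_eq_zero E r c hv]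
  norm_num

lemma stmt7_Sden_const (x : ℝ) :
    Sden E r c (fun _ => x)
      = (∑ u ∈ ball E r (c + 1),
          Real.exp (lamc E r c * ((if u ∈ ball E r c then 1 else 0)
            + x * (degc E r c u : ℝ))))
        + ((Fintype.card V : ℝ) - ((ball E r (c + 1)).card : ℝ)) := by
  unfold Sden
  rw [← Finset.sum_sdiff (Finset.subset_univ (ball E r (c + 1)))]
  have h1 : ∑ v ∈ Finset.univ \ ball E r (c + 1), Real.exp (xi E r c (fun _ => x) v)
      = ((Fintype.card V : ℝ) - ((ball E r (c + 1)).card : ℝ)) := by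
    rw [Finset.sum_congr rfl fun v hv => by
      rw [stmt7_xi_const_zero E r c (Finset.mem_sdiff.mp hv).2, Real.exp_zero]]
    rw [Finset.sum_const, nsmul_eq_mul, mul_one,
      Finset.card_sdiff_of_subset (Finset.subset_univ _), Finset.card_univ]
    rw [Nat.cast_sub (Finset.card_le_univ _)]
  have h2 : ∑ v ∈ ball E r (c + 1), Real.exp (xi E r c (fun _ => x) v)
      = ∑ u ∈ ball E r (c + 1),
          Real.exp (lamc E r c * ((if u ∈ ball E r c then 1 else 0)
            + x * (degc E r c u : ℝ))) :=
    Finset.sum_congr rfl fun u _ => by rw [stmt7_xi_const]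
  rw [h1, h2]
  ring

lemma stmt7_num_const (x : ℝ) :
    ∑ v : V, (degc E r c v : ℝ) * Real.exp (xi E r c (fun _ => x) v)
      = ∑ u ∈ ball E r (c + 1), (degc E r c u : ℝ) *
          Real.exp (lamc E r c * ((if u ∈ ball E r c then 1 else 0)
            + x * (degc E r c u : ℝ))) := by
  rw [← Finset.sum_subset (Finset.subset_univ (ball E r (c + 1)))
    (fun v _ hv => by rw [stmt7_degc_eq_zero E r c hv]; norm_num)]
  exact Finset.sum_congr rfl fun u _ => by rw [stmt7_xi_const]

lemma stmt7_sum_dco_const [Nonempty V] (p : V) (x : ℝ) :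
    ∑ u : V, dco E r c p (fun _ => x) u
      = lamc E r c * (-(degc E r c p : ℝ) + Fc E r c x) := by
  unfold dco
  rw [← Finset.mul_sum]
  congr 1
  rw [Finset.sum_add_distrib, Finset.sum_neg_distrib, stmt7_sum_chiS]
  congr 1
  rw [← Finset.sum_div]
  rw [Finset.sum_comm]
  have h1 : ∑ v : V, ∑ u : V, chiS E r c u v * Real.exp (xi E r c (fun _ => x) v)
      = ∑ v : V, (degc E r c v : ℝ) * Real.exp (xi E r c (fun _ => x) v) :=
    Finset.sum_congr rfl fun v _ => by
      rw [← Finset.sum_mul, stmt7_sum_chiS]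
  rw [h1, stmt7_num_const, stmt7_Sden_const]
  rfl

lemma stmt7_PhiG_const [Nonempty V] (p : V) (x : ℝ) (v : V) :
    PhiG E r c p (fun _ => x) v
      = (Fc E r c x - (degc E r c p : ℝ))
          / ((Fintype.card V : ℝ) * Real.sqrt ((ball E r c).card : ℝ)) := by
  have hcomp : ∀ π : Equiv.Perm V, (fun _ : V => x) ∘ π = fun _ => x := fun π => rfl
  unfold PhiG
  rw [Finset.sum_congr rfl fun π _ => by rw [hcomp π]]
  have hinv : ∑ π : Equiv.Perm V, dco E r c p (fun _ => x) (π⁻¹ v)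
      = ∑ π : Equiv.Perm V, dco E r c p (fun _ => x) (π v) :=
    Equiv.sum_comp (Equiv.inv (Equiv.Perm V))
      (fun π : Equiv.Perm V => dco E r c p (fun _ => x) (π v))
  rw [hinv]
  have hcard : (0:ℝ) < (Fintype.card V : ℝ) := by
    exact_mod_cast Fintype.card_pos
  have hkey := stmt7_sum_perm_apply (fun u => dco E r c p (fun _ => x) u) v
  have hsum : ∑ π : Equiv.Perm V, dco E r c p (fun _ => x) (π v)
      = (Nat.factorial (Fintype.card V) : ℝ) *
          (∑ u : V, dco E r c p (fun _ => x) u) / (Fintype.card V : ℝ) := by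
    field_simp
    linarith [hkey]
  rw [hsum, stmt7_sum_dco_const E r c p x]
  have hfac : (0:ℝ) < (Nat.factorial (Fintype.card V) : ℝ) := by
    exact_mod_cast Nat.factorial_pos _
  rw [← mul_div_assoc, ← mul_assoc, inv_mul_cancel₀ (ne_of_gt hfac), one_mul]
  unfold lamc
  rw [div_eq_mul_inv, div_eq_mul_inv, div_eq_mul_inv, mul_inv]
  ring

end Aux8

/-- under gradient flow on the permutation-averaged coconut loss started
at 0, all coordinates of μ(t) stay equal to a common scalar μ̄(t), which satisfies the
ODE  μ̄'(t) = (α/(n√K))·(d_p − F(μ̄(t))). -/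
theorem stmt7 {V : Type*} [Fintype V] [DecidableEq V]
    (E : Finset (V × V)) (r : V) (c : ℕ)
    (p : V) (hp : p ∈ ball E r (c + 1)) (hdp : 1 ≤ degc E r c p)
    (α : ℝ) (hα : 0 < α)
    (μ : ℝ → V → ℝ) (hinit : ∀ v : V, μ 0 v = 0)
    (hflow : ∀ t ∈ Set.Ici (0 : ℝ), ∀ v : V, ∃ D : ℝ,
      HasDerivAt (fun x => avgCocoLoss E r c p (Function.update (μ t) v x)) D (μ t v)
      ∧ HasDerivWithinAt (fun s => μ s v) (-α * D) (Set.Ici (0 : ℝ)) t) :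
    ∃ μbar : ℝ → ℝ,
      (∀ t ∈ Set.Ici (0 : ℝ), ∀ v : V, μ t v = μbar t)
      ∧ ∀ t ∈ Set.Ici (0 : ℝ),
          HasDerivWithinAt μbar
            ((α / ((Fintype.card V : ℝ) * Real.sqrt ((ball E r c).card : ℝ)))
              * ((degc E r c p : ℝ) - Fc E r c (μbar t)))
            (Set.Ici (0 : ℝ)) t := by
  have hne : Nonempty V := ⟨p⟩
  classical
  have hstep1 : ∀ t ∈ Set.Ici (0:ℝ), ∀ v : V,
      HasDerivWithinAt (fun s => μ s v) (-α * PhiG E r c p (μ t) v) (Set.Ici 0) t := by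
    intro t ht v
    obtain ⟨D, hD1, hD2⟩ := hflow t ht v
    have hDval : D = PhiG E r c p (μ t) v :=
      hD1.unique (stmt7_hasDerivAt_avg_update E r c p (μ t) v)
    rwa [hDval] at hD2
  set VF : (V → ℝ) → (V → ℝ) := fun y v => -α * PhiG E r c p y v with hVF
  set C : ℝ := α * (2 * lamc E r c ^ 2 * ((ball E r c).card : ℝ)) with hC
  have hlnn := stmt7_lamc_nonneg E r c
  have hCnn : 0 ≤ C := by
    apply mul_nonneg hα.le
    positivity
  have hlip : LipschitzWith (Real.toNNReal C) VF := by
    apply LipschitzWith.of_dist_le_mul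
    intro y y'
    rw [Real.coe_toNNReal _ hCnn]
    apply (dist_pi_le_iff (mul_nonneg hCnn dist_nonneg)).mpr
    intro v
    rw [hVF, Real.dist_eq]
    have heq : -α * PhiG E r c p y v - -α * PhiG E r c p y' v
        = -α * (PhiG E r c p y v - PhiG E r c p y' v) := by ring
    rw [heq, abs_mul, abs_neg, abs_of_pos hα]
    calc α * |PhiG E r c p y v - PhiG E r c p y' v|
        ≤ α * (2 * lamc E r c ^ 2 * ((ball E r c).card : ℝ) * dist y y') :=
          mul_le_mul_of_nonneg_left (stmt7_PhiG_lip E r c p y y' v) hα.le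
      _ = C * dist y y' := by rw [hC]; ring
  have hvec : ∀ t ∈ Set.Ici (0:ℝ), HasDerivWithinAt (fun s => μ s) (VF (μ t))
      (Set.Ici 0) t :=
    fun t ht => hasDerivWithinAt_pi.2 fun v => hstep1 t ht v
  have hcont : ContinuousOn (fun s => μ s) (Set.Ici (0:ℝ)) :=
    fun t ht => (hvec t ht).continuousWithinAt
  have hsym : ∀ σ : Equiv.Perm V, ∀ t ∈ Set.Ici (0:ℝ), μ t = μ t ∘ σ := by
    intro σ t ht
    have h0t : (0:ℝ) ≤ t := ht
    have hgvec : ∀ s ∈ Set.Ici (0:ℝ),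
        HasDerivWithinAt (fun s' => μ s' ∘ σ) (VF (μ s ∘ σ)) (Set.Ici 0) s := by
      intro s hs
      apply hasDerivWithinAt_pi.2
      intro v
      have h1 := hstep1 s hs (σ v)
      have h2 : VF (μ s ∘ σ) v = -α * PhiG E r c p (μ s) (σ v) := by
        show -α * PhiG E r c p (μ s ∘ ⇑σ) v = _
        rw [stmt7_PhiG_comp E r c p (μ s) σ v]
      rw [h2]
      exact h1
    have hgcont : ContinuousOn (fun s => μ s ∘ σ) (Set.Ici (0:ℝ)) :=
      fun s hs => (hgvec s hs).continuousWithinAt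
    have key := ODE_solution_unique (v := fun _ : ℝ => VF) (K := Real.toNNReal C)
      (f := fun s => μ s) (g := fun s => μ s ∘ σ) (a := 0) (b := t)
      (fun _ => hlip)
      (hcont.mono Set.Icc_subset_Ici_self)
      (fun s hs => (hvec s (Set.mem_Ici.mpr hs.1)).mono
        (Set.Ici_subset_Ici.mpr hs.1))
      (hgcont.mono Set.Icc_subset_Ici_self)
      (fun s hs => (hgvec s (Set.mem_Ici.mpr hs.1)).mono
        (Set.Ici_subset_Ici.mpr hs.1))
      (by
        funext v
        show μ 0 v = μ 0 (σ v)
        rw [hinit v, hinit (σ v)])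
    exact key (Set.mem_Icc.mpr ⟨h0t, le_refl t⟩)
  refine ⟨fun t => μ t p, ?_, ?_⟩
  · intro t ht v
    have := hsym (Equiv.swap p v) t ht
    have h2 := congrFun this p
    rw [Function.comp_apply, Equiv.swap_apply_left] at h2
    exact h2.symm
  · intro t ht
    have hconst : μ t = fun _ => μ t p := funext fun v => by
      have := hsym (Equiv.swap p v) t ht
      have h2 := congrFun this p
      rw [Function.comp_apply, Equiv.swap_apply_left] at h2
      exact h2.symm
    have hd := hstep1 t ht p
    rw [hconst, stmt7_PhiG_const E r c p (μ t p) p] at hd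
    convert hd using 1
    rw [div_eq_mul_inv, div_eq_mul_inv]
    ring
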